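/- Let C be a category with an object extension structure X, and let Z be a q-morphism structure over X. Define Tm(Γ) to be the set of pairs (A, s) where A : Ty(Γ) and s : Γ → Γ.A is a section of π_A, with reindexing given by pulling back sections along the q-morphism pullback squares, p : Tm → Ty the first projection, and te_A := (A[π_A], δ_{π_A}) where δ is the diagonal of the pullback square for (π_A, A). Then this forms a term-structure over X compatible with Z. -/

import Mathlib

open CategoryTheory Limits Opposite

universe v v' v₂ u u' u₂ u₃ u₄

/-- An object extension structure on a category `C`. -/
structure ObjExtStructure (C : Type u) [Category.{v} C] where
  Ty : Cᵒᵖ ⥤ Type v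
  ext : ∀ (Γ : C), Ty.obj (op Γ) → C
  π : ∀ (Γ : C) (A : Ty.obj (op Γ)), ext Γ A ⟶ Γ

/-- A representation of the fiber of a map of presheaves `p : Tm ⟶ Ty` over `A : Ty(Γ)`. -/
structure FiberRepresentation {C : Type u} [Category.{v} C] {Ty Tm : Cᵒᵖ ⥤ Type v}
    (p : Tm ⟶ Ty) (Γ : C) (A : Ty.obj (op Γ)) where
  ext : C
  π : ext ⟶ Γ
  te : Tm.obj (op ext)
  te_p : p.app (op ext) te = Ty.map π.op A
  isPB : IsPullback (yonedaEquiv.symm te) (yoneda.map π) p (yonedaEquiv.symm A)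

/-- A CwF structure (à la Fiore) on a category `C`. -/
structure CwFStructure (C : Type u) [Category.{v} C] where
  Ty : Cᵒᵖ ⥤ Type v
  Tm : Cᵒᵖ ⥤ Type v
  p : Tm ⟶ Ty
  rep : ∀ (Γ : C) (A : Ty.obj (op Γ)), FiberRepresentation p Γ A

/-- A (functional) term-structure over an object extension structure `X`. -/
structure TermStructure {C : Type u} [Category.{v} C] (X : ObjExtStructure C) where
  Tm : Cᵒᵖ ⥤ Type v
  p : Tm ⟶ X.Ty
  te : ∀ (Γ : C) (A : X.Ty.obj (op Γ)), Tm.obj (op (X.ext Γ A))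
  te_p : ∀ Γ A, p.app _ (te Γ A) = X.Ty.map (X.π Γ A).op A
  isPB : ∀ Γ A, IsPullback (yonedaEquiv.symm (te Γ A)) (yoneda.map (X.π Γ A)) p (yonedaEquiv.symm A)

/-- A (split) q-morphism structure over an object extension structure `X`. -/
structure qMorphismStructure {C : Type u} [Category.{v} C] (X : ObjExtStructure C) where
  q : ∀ {Γ' Γ : C} (f : Γ' ⟶ Γ) (A : X.Ty.obj (op Γ)),
      X.ext Γ' (X.Ty.map f.op A) ⟶ X.ext Γ A
  isPB : ∀ {Γ' Γ : C} (f : Γ' ⟶ Γ) (A : X.Ty.obj (op Γ)),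
      IsPullback (q f A) (X.π Γ' (X.Ty.map f.op A)) (X.π Γ A) f
  q_id : ∀ (Γ : C) (A : X.Ty.obj (op Γ)), q (𝟙 Γ) A = eqToHom (by simp)
  q_comp : ∀ {Γ'' Γ' Γ : C} (f' : Γ'' ⟶ Γ') (f : Γ' ⟶ Γ) (A : X.Ty.obj (op Γ)),
      q (f' ≫ f) A = eqToHom (by simp) ≫ q f' (X.Ty.map f.op A) ≫ q f A

/-- Compatibility between a term-structure and a q-morphism structure. -/
def Compatible {C : Type u} [Category.{v} C] {X : ObjExtStructure C}
    (Y : TermStructure X) (Z : qMorphismStructure X) : Prop :=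
  ∀ {Γ' Γ : C} (f : Γ' ⟶ Γ) (A : X.Ty.obj (op Γ)),
    Y.te Γ' (X.Ty.map f.op A) = Y.Tm.map (Z.q f A).op (Y.te Γ A)

/-- A split type-category structure on `C` (Pitts' type-categories, split version). -/
structure SplitTypeCatStructure (C : Type u) [Category.{v} C] where
  Ty : C → Type v
  isSet : ∀ (Γ : C) (A B : Ty Γ) (p q : A = B), p = q
  ext : ∀ Γ, Ty Γ → C
  π : ∀ Γ A, ext Γ A ⟶ Γ
  reind : ∀ {Γ' Γ : C} (_ : Γ' ⟶ Γ), Ty Γ → Ty Γ'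
  q : ∀ {Γ' Γ : C} (f : Γ' ⟶ Γ) (A : Ty Γ), ext Γ' (reind f A) ⟶ ext Γ A
  isPB : ∀ {Γ' Γ : C} (f : Γ' ⟶ Γ) (A : Ty Γ),
      IsPullback (q f A) (π Γ' (reind f A)) (π Γ A) f
  reind_id : ∀ (Γ : C) (A : Ty Γ), reind (𝟙 Γ) A = A
  q_id : ∀ (Γ : C) (A : Ty Γ), q (𝟙 Γ) A = eqToHom (by rw [reind_id])
  reind_comp : ∀ {Γ'' Γ' Γ : C} (f' : Γ'' ⟶ Γ') (f : Γ' ⟶ Γ) (A : Ty Γ),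
      reind (f' ≫ f) A = reind f' (reind f A)
  q_comp : ∀ {Γ'' Γ' Γ : C} (f' : Γ'' ⟶ Γ') (f : Γ' ⟶ Γ) (A : Ty Γ),
      q (f' ≫ f) A = eqToHom (by rw [reind_comp]) ≫ q f' (reind f A) ≫ q f A

/-- A `J`-pullback of `p : Ũ ⟶ U` along `f : J(X) ⟶ U`. -/
structure RelPullback {C : Type u} {D : Type u'} [Category.{v} C] [Category.{v'} D]
    (J : C ⥤ D) {Ut U : D} (p : Ut ⟶ U) (X : C) (f : J.obj X ⟶ U) where
  obj : C
  pr : obj ⟶ X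
  Q : J.obj obj ⟶ Ut
  isPB : IsPullback Q (J.map pr) p f

/-- A universe relative to a functor `J`. -/
structure RelUniverse {C : Type u} {D : Type u'} [Category.{v} C] [Category.{v'} D]
    (J : C ⥤ D) where
  Ut : D
  U : D
  p : Ut ⟶ U
  str : ∀ (X : C) (f : J.obj X ⟶ U), RelPullback J p X f

/-- A weak universe relative to a functor `J`. -/
structure WeakRelUniverse {C : Type u} {D : Type u'} [Category.{v} C] [Category.{v'} D]
    (J : C ⥤ D) where
  Ut : D
  U : D
  p : Ut ⟶ U
  str : ∀ (X : C) (f : J.obj X ⟶ U), Nonempty (RelPullback J p X f)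

/-- A category is univalent if `idtoiso` is an equivalence. -/
def IsUnivalentCat (C : Type u) [Category.{v} C] : Prop :=
  ∀ X Y : C, Function.Bijective (fun h : X = Y => eqToIso h)

/-- A representable map of presheaves on `C`. -/
structure RepMapPresheaves (C : Type u) [Category.{v} C] where
  Ty : Cᵒᵖ ⥤ Type v
  Tm : Cᵒᵖ ⥤ Type v
  p : Tm ⟶ Ty
  rep : ∀ (Γ : C) (A : Ty.obj (op Γ)), Nonempty (FiberRepresentation p Γ A)

/-- The univalence axiom for a universe. -/
def UnivalenceAxiom : Prop :=
  ∀ α β : Type v, Function.Bijective (fun h : α = β => Equiv.cast h)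

/-- The set of pairs of a type `A` over `Γ` and a section of its projection. -/
abbrev SecSet {C : Type u} [Category.{v} C] (X : ObjExtStructure C) (Γ : C) : Type v :=
  Σ A : X.Ty.obj (op Γ), {s : Γ ⟶ X.ext Γ A // s ≫ X.π Γ A = 𝟙 Γ}

/-- Reindexing of sections along `f`, via the q-morphism pullback squares. -/
noncomputable def secReind {C : Type u} [Category.{v} C] {X : ObjExtStructure C}
    (Z : qMorphismStructure X) {Γ' Γ : C} (f : Γ' ⟶ Γ) (t : SecSet X Γ) : SecSet X Γ' :=
  ⟨X.Ty.map f.op t.1,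
    ⟨(Z.isPB f t.1).lift (f ≫ t.2.1) (𝟙 Γ') (by simp [t.2.2]),
     (Z.isPB f t.1).lift_snd _ _ _⟩⟩

/-- The diagonal section of the pullback square for `π_A` and `A`. -/
noncomputable def diagSec {C : Type u} [Category.{v} C] {X : ObjExtStructure C}
    (Z : qMorphismStructure X) (Γ : C) (A : X.Ty.obj (op Γ)) :
    {s : X.ext Γ A ⟶ X.ext (X.ext Γ A) (X.Ty.map (X.π Γ A).op A) //
      s ≫ X.π (X.ext Γ A) (X.Ty.map (X.π Γ A).op A) = 𝟙 (X.ext Γ A)} :=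
  ⟨(Z.isPB (X.π Γ A) A).lift (𝟙 _) (𝟙 _) (by simp),
   (Z.isPB (X.π Γ A) A).lift_snd _ _ _⟩


lemma isPullback_of_ptwise {D : Type u₂} [Category.{v₂} D] {P X Y Z : D ⥤ Type v'}
    {fst : P ⟶ X} {snd : P ⟶ Y} {f : X ⟶ Z} {g : Y ⟶ Z}
    (w : fst ≫ f = snd ≫ g)
    (h : ∀ (d : D) (x : X.obj d) (y : Y.obj d), f.app d x = g.app d y →
      ∃! p : P.obj d, fst.app d p = x ∧ snd.app d p = y) :
    IsPullback fst snd f g := by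
  have key : ∀ (s : PullbackCone f g) (d : D) (x : s.pt.obj d),
      f.app d (s.fst.app d x) = g.app d (s.snd.app d x) := fun s d x =>
    (ConcreteCategory.congr_hom (congr_app s.condition d) x)
  refine ⟨⟨w⟩, ⟨PullbackCone.IsLimit.mk w ?_ ?_ ?_ ?_⟩⟩
  · intro s
    refine ⟨fun d => TypeCat.ofHom (fun x => (h d _ _ (key s d x)).choose), ?_⟩
    intro d d' u
    refine ConcreteCategory.hom_ext _ _ fun x => ?_
    apply ((h d' (s.fst.app d' (s.pt.map u x)) (s.snd.app d' (s.pt.map u x))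
      (key s d' _)).unique ?_ ?_).symm.trans rfl
    · constructor
      · have n1 := ConcreteCategory.congr_hom (fst.naturality u) ((h d _ _ (key s d x)).choose)
        have n2 := ConcreteCategory.congr_hom (s.fst.naturality u) x
        simp only [types_comp_apply, TypeCat.ofHom_apply] at n1 n2 ⊢
        rw [n1, (h d _ _ (key s d x)).choose_spec.1.1]
        exact n2.symm
      · have n1 := ConcreteCategory.congr_hom (snd.naturality u) ((h d _ _ (key s d x)).choose)
        have n2 := ConcreteCategory.congr_hom (s.snd.naturality u) x
        simp only [types_comp_apply, TypeCat.ofHom_apply] at n1 n2 ⊢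
        rw [n1, (h d _ _ (key s d x)).choose_spec.1.2]
        exact n2.symm
    · exact (h d' _ _ (key s d' (s.pt.map u x))).choose_spec.1
  · intro s; ext d x; exact (h d _ _ (key s d x)).choose_spec.1.1
  · intro s; ext d x; exact (h d _ _ (key s d x)).choose_spec.1.2
  · intro s m hm1 hm2
    ext d x
    exact (h d _ _ (key s d x)).unique
      ⟨ConcreteCategory.congr_hom (congr_app hm1 d) x, ConcreteCategory.congr_hom (congr_app hm2 d) x⟩
      (h d _ _ (key s d x)).choose_spec.1

section Helpers
variable {C : Type u} [Category.{v} C] {X : ObjExtStructure C} (Z : qMorphismStructure X)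

lemma eqToHom_π {Γ : C} {B B' : X.Ty.obj (op Γ)} (h : B = B') :
    eqToHom (congrArg (X.ext Γ) h) ≫ X.π Γ B' = X.π Γ B := by subst h; simp

lemma sec_mk_eq {Γ : C} {B B' : X.Ty.obj (op Γ)} (h : B = B')
    {s : Γ ⟶ X.ext Γ B} {hs : s ≫ X.π Γ B = 𝟙 Γ} {s' : Γ ⟶ X.ext Γ B'}
    {hs' : s' ≫ X.π Γ B' = 𝟙 Γ}
    (h2 : s ≫ eqToHom (congrArg (X.ext Γ) h) = s') :
    (⟨B, s, hs⟩ : SecSet X Γ) = ⟨B', s', hs'⟩ := by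
  subst h
  simp only [eqToHom_refl, Category.comp_id] at h2
  subst h2
  rfl

lemma secReind_eq {Γ' Γ : C} (f : Γ' ⟶ Γ) (t : SecSet X Γ)
    {B : X.Ty.obj (op Γ')} (hB : B = X.Ty.map f.op t.1)
    {s : Γ' ⟶ X.ext Γ' B} (hs : s ≫ X.π Γ' B = 𝟙 Γ')
    (hc : s ≫ eqToHom (congrArg (X.ext Γ') hB) ≫ Z.q f t.1 = f ≫ t.2.1) :
    secReind Z f t = ⟨B, s, hs⟩ := by
  subst hB
  simp only [eqToHom_refl, Category.id_comp] at hc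
  refine (sec_mk_eq rfl ?_).symm
  simp only [eqToHom_refl, Category.comp_id]
  exact ((Z.isPB f t.1).hom_ext
    (by rw [(Z.isPB f t.1).lift_fst, hc]) (by rw [(Z.isPB f t.1).lift_snd, hs]))

lemma secReind_id {Γ : C} (t : SecSet X Γ) : secReind Z (𝟙 Γ) t = t := by
  obtain ⟨A, s, hs⟩ := t
  have hB : A = X.Ty.map (𝟙 Γ).op A := by simp
  refine (secReind_eq Z (𝟙 Γ) ⟨A, s, hs⟩ hB hs ?_)
  rw [Z.q_id]
  simp

lemma secReind_fst {Γ' Γ : C} (f : Γ' ⟶ Γ) (t : SecSet X Γ) :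
    (secReind Z f t).1 = X.Ty.map f.op t.1 := rfl

lemma secReind_snd_q {Γ' Γ : C} (f : Γ' ⟶ Γ) (t : SecSet X Γ) :
    (secReind Z f t).2.1 ≫ Z.q f t.1 = f ≫ t.2.1 :=
  (Z.isPB f t.1).lift_fst _ _ _

lemma secReind_snd_π {Γ' Γ : C} (f : Γ' ⟶ Γ) (t : SecSet X Γ) :
    (secReind Z f t).2.1 ≫ X.π Γ' (X.Ty.map f.op t.1) = 𝟙 Γ' :=
  (Z.isPB f t.1).lift_snd _ _ _

lemma secReind_comp {Γ'' Γ' Γ : C} (f' : Γ'' ⟶ Γ') (f : Γ' ⟶ Γ) (t : SecSet X Γ) :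
    secReind Z (f' ≫ f) t = secReind Z f' (secReind Z f t) := by
  have hB : X.Ty.map (f' ≫ f).op t.1 = X.Ty.map f'.op (X.Ty.map f.op t.1) := by simp
  refine (secReind_eq Z f' (secReind Z f t) (B := X.Ty.map (f' ≫ f).op t.1) hB
    (secReind_snd_π Z (f' ≫ f) t) ?_).symm
  apply (Z.isPB f t.1).hom_ext
  · have e1 : (eqToHom (congrArg (X.ext Γ'') hB) ≫ Z.q f' (X.Ty.map f.op t.1)) ≫ Z.q f t.1
        = Z.q (f' ≫ f) t.1 := by
      rw [Z.q_comp f' f t.1]; simp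
    calc ((secReind Z (f' ≫ f) t).2.1 ≫ eqToHom (congrArg (X.ext Γ'') hB)
            ≫ Z.q f' (X.Ty.map f.op t.1)) ≫ Z.q f t.1
        = (secReind Z (f' ≫ f) t).2.1 ≫ Z.q (f' ≫ f) t.1 := by rw [← e1]; simp; rfl
      _ = (f' ≫ f) ≫ t.2.1 := secReind_snd_q Z (f' ≫ f) t
      _ = f' ≫ (secReind Z f t).2.1 ≫ Z.q f t.1 := by
          rw [secReind_snd_q Z f t]; simp
      _ = (f' ≫ (secReind Z f t).2.1) ≫ Z.q f t.1 := by erw [Category.assoc]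
  · calc ((secReind Z (f' ≫ f) t).2.1 ≫ eqToHom (congrArg (X.ext Γ'') hB)
            ≫ Z.q f' (X.Ty.map f.op t.1)) ≫ X.π Γ' (X.Ty.map f.op t.1)
        = (secReind Z (f' ≫ f) t).2.1 ≫ eqToHom (congrArg (X.ext Γ'') hB)
            ≫ X.π Γ'' (X.Ty.map f'.op (X.Ty.map f.op t.1)) ≫ f' := by
          rw [Category.assoc, Category.assoc, (Z.isPB f' (X.Ty.map f.op t.1)).w]
      _ = ((secReind Z (f' ≫ f) t).2.1 ≫ X.π Γ'' (X.Ty.map (f' ≫ f).op t.1)) ≫ f' := by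
          erw [← Category.assoc, ← Category.assoc, Category.assoc _ (eqToHom _), eqToHom_π (h := hB)]
      _ = f' := by rw [secReind_snd_π Z (f' ≫ f) t]; simp
      _ = (f' ≫ (secReind Z f t).2.1) ≫ X.π Γ' (X.Ty.map f.op t.1) := by
          erw [Category.assoc, secReind_snd_π Z f t]; simp

end Helpers

section Helpers2
variable {C : Type u} [Category.{v} C] {X : ObjExtStructure C} (Z : qMorphismStructure X)

lemma sec_eq_snd {Γ : C} {t t' : SecSet X Γ} (h : t = t') :
    t.2.1 ≫ eqToHom (congrArg (X.ext Γ) (congrArg Sigma.fst h)) = t'.2.1 := by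
  subst h; simp

lemma diagSec_q (Γ : C) (A : X.Ty.obj (op Γ)) :
    (diagSec Z Γ A).1 ≫ Z.q (X.π Γ A) A = 𝟙 (X.ext Γ A) :=
  (Z.isPB (X.π Γ A) A).lift_fst _ _ _

lemma comp_q_eq {Δ Γ : C} (y : Δ ⟶ Γ) (A : X.Ty.obj (op Γ)) (g' : Δ ⟶ X.ext Γ A)
    (hy : g' ≫ X.π Γ A = y)
    (hE : X.ext Δ (X.Ty.map y.op A)
      = X.ext Δ (X.Ty.map g'.op (X.Ty.map (X.π Γ A).op A))) :
    Z.q y A = eqToHom hE ≫ Z.q g' (X.Ty.map (X.π Γ A).op A) ≫ Z.q (X.π Γ A) A := by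
  subst hy
  rw [Z.q_comp g' (X.π Γ A) A]

lemma q_congr {Γ' Γ : C} {f₁ f₂ : Γ' ⟶ Γ} (h : f₁ = f₂) (A : X.Ty.obj (op Γ))
    (hE : X.ext Γ' (X.Ty.map f₁.op A) = X.ext Γ' (X.Ty.map f₂.op A)) :
    Z.q f₁ A = eqToHom hE ≫ Z.q f₂ A := by
  subst h; simp

lemma q_two_ways {Δ Γ₁ Γ₂ Γ : C} (u₁ : Δ ⟶ Γ₁) (v₁ : Γ₁ ⟶ Γ) (u₂ : Δ ⟶ Γ₂) (v₂ : Γ₂ ⟶ Γ)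
    (h : u₁ ≫ v₁ = u₂ ≫ v₂) (A : X.Ty.obj (op Γ))
    (hE : X.ext Δ (X.Ty.map u₁.op (X.Ty.map v₁.op A))
      = X.ext Δ (X.Ty.map u₂.op (X.Ty.map v₂.op A))) :
    Z.q u₁ (X.Ty.map v₁.op A) ≫ Z.q v₁ A
      = eqToHom hE ≫ Z.q u₂ (X.Ty.map v₂.op A) ≫ Z.q v₂ A := by
  have h₁ : X.ext Δ (X.Ty.map (u₁ ≫ v₁).op A)
      = X.ext Δ (X.Ty.map u₁.op (X.Ty.map v₁.op A)) := by simp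
  have e₁ := Z.q_comp u₁ v₁ A
  have e₂ := Z.q_comp u₂ v₂ A
  calc Z.q u₁ (X.Ty.map v₁.op A) ≫ Z.q v₁ A
      = eqToHom h₁.symm ≫ Z.q (u₁ ≫ v₁) A := by rw [e₁]; simp
    _ = eqToHom h₁.symm ≫ eqToHom (by rw [h]) ≫ Z.q (u₂ ≫ v₂) A := by
        rw [← q_congr Z h A]
    _ = eqToHom h₁.symm ≫ eqToHom (by rw [h]) ≫ eqToHom (by simp)
          ≫ Z.q u₂ (X.Ty.map v₂.op A) ≫ Z.q v₂ A := by rw [← e₂]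
    _ = eqToHom hE ≫ Z.q u₂ (X.Ty.map v₂.op A) ≫ Z.q v₂ A := by simp

end Helpers2

section Helpers3
variable {C : Type u} [Category.{v} C] {X : ObjExtStructure C} (Z : qMorphismStructure X)

/-- The canonical term over an extended context, as an element of `SecSet`. -/
noncomputable def teSec (Γ : C) (A : X.Ty.obj (op Γ)) : SecSet X (X.ext Γ A) :=
  ⟨X.Ty.map (X.π Γ A).op A, diagSec Z Γ A⟩

lemma secReind_teSec {Γ' Γ : C} (f : Γ' ⟶ Γ) (A : X.Ty.obj (op Γ)) :
    teSec Z Γ' (X.Ty.map f.op A) = secReind Z (Z.q f A) (teSec Z Γ A) := by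
  have hB : X.Ty.map (X.π Γ' (X.Ty.map f.op A)).op (X.Ty.map f.op A)
      = X.Ty.map (Z.q f A).op (X.Ty.map (X.π Γ A).op A) := by
    rw [← FunctorToTypes.map_comp_apply, ← FunctorToTypes.map_comp_apply, ← op_comp, ← op_comp,
      (Z.isPB f A).w]
  refine (secReind_eq Z (Z.q f A) (teSec Z Γ A) hB (diagSec Z Γ' (X.Ty.map f.op A)).2 ?_).symm
  apply (Z.isPB (X.π Γ A) A).hom_ext
  · have tw := q_two_ways Z (X.π Γ' (X.Ty.map f.op A)) f (Z.q f A) (X.π Γ A)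
      ((Z.isPB f A).w).symm A (congrArg (X.ext (X.ext Γ' (X.Ty.map f.op A))) hB)
    calc ((diagSec Z Γ' (X.Ty.map f.op A)).1 ≫ eqToHom (congrArg _ hB)
            ≫ Z.q (Z.q f A) (X.Ty.map (X.π Γ A).op A)) ≫ Z.q (X.π Γ A) A
        = (diagSec Z Γ' (X.Ty.map f.op A)).1
            ≫ Z.q (X.π Γ' (X.Ty.map f.op A)) (X.Ty.map f.op A) ≫ Z.q f A := by
          rw [Category.assoc, Category.assoc, ← tw]
      _ = Z.q f A := by rw [← Category.assoc, diagSec_q]; simp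
      _ = (Z.q f A ≫ (diagSec Z Γ A).1) ≫ Z.q (X.π Γ A) A := by
          rw [Category.assoc, diagSec_q]; simp
  · calc ((diagSec Z Γ' (X.Ty.map f.op A)).1 ≫ eqToHom (congrArg _ hB)
            ≫ Z.q (Z.q f A) (X.Ty.map (X.π Γ A).op A))
            ≫ X.π (X.ext Γ A) (X.Ty.map (X.π Γ A).op A)
        = (diagSec Z Γ' (X.Ty.map f.op A)).1 ≫ eqToHom (congrArg _ hB)
            ≫ X.π (X.ext Γ' (X.Ty.map f.op A))
              (X.Ty.map (Z.q f A).op (X.Ty.map (X.π Γ A).op A)) ≫ Z.q f A := by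
          rw [Category.assoc, Category.assoc,
            (Z.isPB (Z.q f A) (X.Ty.map (X.π Γ A).op A)).w]
      _ = ((diagSec Z Γ' (X.Ty.map f.op A)).1
            ≫ X.π (X.ext Γ' (X.Ty.map f.op A))
              (X.Ty.map (X.π Γ' (X.Ty.map f.op A)).op (X.Ty.map f.op A))) ≫ Z.q f A := by
          rw [← Category.assoc, ← Category.assoc, Category.assoc _ (eqToHom _),
            eqToHom_π (h := hB)]
      _ = Z.q f A := by rw [(diagSec Z Γ' (X.Ty.map f.op A)).2]; simp
      _ = (Z.q f A ≫ (diagSec Z Γ A).1)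
            ≫ X.π (X.ext Γ A) (X.Ty.map (X.π Γ A).op A) := by
          rw [Category.assoc, (diagSec Z Γ A).2]; simp

end Helpers3

section Helpers4
variable {C : Type u} [Category.{v} C] {X : ObjExtStructure C} (Z : qMorphismStructure X)

lemma fiber_exists_unique (Γ : C) (A : X.Ty.obj (op Γ)) (Δ : C) (y : Δ ⟶ Γ)
    (x : SecSet X Δ) (hxy : x.1 = X.Ty.map y.op A) :
    ∃! g : Δ ⟶ X.ext Γ A, secReind Z g (teSec Z Γ A) = x ∧ g ≫ X.π Γ A = y := by
  obtain ⟨B, s, hs⟩ := x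
  dsimp at hxy
  subst hxy
  have hsnd : (s ≫ Z.q y A) ≫ X.π Γ A = y := by
    rw [Category.assoc, (Z.isPB y A).w, ← Category.assoc, hs]; simp
  have hB : X.Ty.map y.op A
      = X.Ty.map (s ≫ Z.q y A).op (X.Ty.map (X.π Γ A).op A) := by
    rw [← FunctorToTypes.map_comp_apply, ← op_comp, hsnd]
  refine ⟨s ≫ Z.q y A, ⟨?_, hsnd⟩, ?_⟩
  · refine secReind_eq Z (s ≫ Z.q y A) (teSec Z Γ A) hB hs ?_
    apply (Z.isPB (X.π Γ A) A).hom_ext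
    · calc (s ≫ eqToHom (congrArg _ hB)
            ≫ Z.q (s ≫ Z.q y A) (X.Ty.map (X.π Γ A).op A)) ≫ Z.q (X.π Γ A) A
          = s ≫ Z.q y A := by
            rw [Category.assoc, Category.assoc,
              ← comp_q_eq Z y A (s ≫ Z.q y A) hsnd (congrArg _ hB)]
        _ = ((s ≫ Z.q y A) ≫ (diagSec Z Γ A).1) ≫ Z.q (X.π Γ A) A := by
            rw [Category.assoc, diagSec_q]; simp
    · calc (s ≫ eqToHom (congrArg _ hB)
            ≫ Z.q (s ≫ Z.q y A) (X.Ty.map (X.π Γ A).op A))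
            ≫ X.π (X.ext Γ A) (X.Ty.map (X.π Γ A).op A)
          = s ≫ eqToHom (congrArg _ hB)
            ≫ X.π Δ (X.Ty.map (s ≫ Z.q y A).op (X.Ty.map (X.π Γ A).op A))
            ≫ (s ≫ Z.q y A) := by
            rw [Category.assoc, Category.assoc,
              (Z.isPB (s ≫ Z.q y A) (X.Ty.map (X.π Γ A).op A)).w]
        _ = (s ≫ X.π Δ (X.Ty.map y.op A)) ≫ (s ≫ Z.q y A) := by
            rw [← Category.assoc, ← Category.assoc, Category.assoc s (eqToHom _),
              eqToHom_π (h := hB)]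
        _ = s ≫ Z.q y A := by rw [hs]; simp
        _ = ((s ≫ Z.q y A) ≫ (diagSec Z Γ A).1)
            ≫ X.π (X.ext Γ A) (X.Ty.map (X.π Γ A).op A) := by
            rw [Category.assoc, (diagSec Z Γ A).2]; simp
  · rintro g' ⟨hx', hy'⟩
    have h2 := sec_eq_snd (X := X) hx'
    have h3 : s ≫ Z.q y A = g' := by
      calc s ≫ Z.q y A
          = (secReind Z g' (teSec Z Γ A)).2.1
            ≫ eqToHom (congrArg (X.ext Δ) (congrArg Sigma.fst hx')) ≫ Z.q y A := by
            rw [← Category.assoc, h2]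
        _ = (secReind Z g' (teSec Z Γ A)).2.1
            ≫ eqToHom (congrArg (X.ext Δ) (congrArg Sigma.fst hx'))
            ≫ eqToHom (by rw [← FunctorToTypes.map_comp_apply, ← op_comp, hy'])
            ≫ Z.q g' (X.Ty.map (X.π Γ A).op A) ≫ Z.q (X.π Γ A) A := by
            rw [← comp_q_eq Z y A g' hy']
        _ = (secReind Z g' (teSec Z Γ A)).2.1
            ≫ Z.q g' (X.Ty.map (X.π Γ A).op A) ≫ Z.q (X.π Γ A) A := by
            erw [← Category.assoc (eqToHom _), eqToHom_trans, eqToHom_refl, Category.id_comp]; rfl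
        _ = (g' ≫ (diagSec Z Γ A).1) ≫ Z.q (X.π Γ A) A := by
            erw [← Category.assoc,
              (show (secReind Z g' (teSec Z Γ A)).2.1
                  ≫ Z.q g' (X.Ty.map (X.π Γ A).op A) = g' ≫ (diagSec Z Γ A).1 from
                secReind_snd_q Z g' (teSec Z Γ A))]
        _ = g' := by rw [Category.assoc, diagSec_q]; simp
    exact h3.symm

/-- The presheaf of sections. -/
noncomputable def TmP : Cᵒᵖ ⥤ Type v where
  obj d := SecSet X (unop d)
  map f := TypeCat.ofHom (fun t => secReind Z f.unop t)
  map_id d := ConcreteCategory.hom_ext _ _ fun t => by exact secReind_id Z t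
  map_comp f g := ConcreteCategory.hom_ext _ _ fun t => by exact secReind_comp Z g.unop f.unop t

/-- The term structure given by sections. -/
noncomputable def TS : TermStructure X where
  Tm := TmP Z
  p := { app := fun d => TypeCat.ofHom (fun t => t.1), naturality := fun _ _ _ => rfl }
  te Γ A := teSec Z Γ A
  te_p Γ A := rfl
  isPB Γ A := by
    apply isPullback_of_ptwise
    · ext d g
      show (secReind Z _ (teSec Z Γ A)).1 = ((yoneda.map (X.π Γ A)) ≫ yonedaEquiv.symm A).app d g
      simp only [yonedaEquiv_symm_app_apply, secReind_fst]
      show X.Ty.map _ (X.Ty.map (X.π Γ A).op A) = X.Ty.map (g ≫ X.π Γ A).op A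
      rw [op_comp, FunctorToTypes.map_comp_apply]
      rfl
    · intro d x y hxy
      simp only [yonedaEquiv_symm_app_apply] at hxy ⊢
      exact fiber_exists_unique Z Γ A (unop d) y x hxy

end Helpers4

theorem stmt3 (C : Type u) [Category.{v} C] (X : ObjExtStructure C)
    (Z : qMorphismStructure X) :
    ∃ Y : TermStructure X, Compatible Y Z ∧
      ∃ e : ∀ Γ : C, Y.Tm.obj (op Γ) ≃ SecSet X Γ,
        (∀ {Γ' Γ : C} (f : Γ' ⟶ Γ) (t : Y.Tm.obj (op Γ)),
            e Γ' (Y.Tm.map f.op t) = secReind Z f (e Γ t)) ∧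
        (∀ (Γ : C) (t : Y.Tm.obj (op Γ)), Y.p.app (op Γ) t = (e Γ t).1) ∧
        (∀ (Γ : C) (A : X.Ty.obj (op Γ)),
            e (X.ext Γ A) (Y.te Γ A) = ⟨X.Ty.map (X.π Γ A).op A, diagSec Z Γ A⟩) := by
  refine ⟨TS Z, ?_, fun Γ => Equiv.refl _, ?_, ?_, ?_⟩
  · intro Γ' Γ f A
    exact secReind_teSec Z f A
  · intro Γ' Γ f t
    rfl
  · intro Γ t
    rfl
  · intro Γ A
    rfl
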